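/- For the group G = (Z/pZ)^ℕ × (Z/p²Z)^ℕ (p prime), there exist subgroups H, K, H₀ of G with G = H·K internally (H ∩ K = 1), H ≅ H₀ ≅ (Z/pZ)^ℕ, K ≅ G/H₀ ≅ G, yet H₀ is not a direct factor of G. Thus the direct extension theorem fails for infinite groups. -/

import Mathlib

set_option linter.unusedSectionVars false

section Aux

variable {M : Type*}

/-- combine two sequences into one, on evens/odds. -/
def cmb [Zero M] (u v : ℕ → M) : ℕ → M :=
  fun m => if m % 2 = 0 then u (m / 2) else v (m / 2)

lemma cmb_even [Zero M] (u v : ℕ → M) (n : ℕ) : cmb u v (2 * n) = u n := by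
  simp [cmb, Nat.mul_div_cancel_left]

lemma cmb_odd [Zero M] (u v : ℕ → M) (n : ℕ) : cmb u v (2 * n + 1) = v n := by
  simp [cmb, Nat.mul_add_mod, Nat.mul_add_div]

lemma cmb_eq_self [Zero M] (f : ℕ → M) :
    cmb (fun n => f (2 * n)) (fun n => f (2 * n + 1)) = f := by
  funext m
  rcases Nat.even_or_odd m with ⟨k, hk⟩ | ⟨k, hk⟩
  · subst hk; rw [show k + k = 2 * k by ring, cmb_even]
  · subst hk; rw [cmb_odd]

lemma cmb_add [AddZeroClass M] (u v u' v' : ℕ → M) :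
    cmb (u + u') (v + v') = cmb u v + cmb u' v' := by
  funext m
  by_cases h : m % 2 = 0 <;> simp [cmb, h, Prod.fst_add, Prod.snd_add, Pi.add_apply]

lemma cmb_zero [AddZeroClass M] : cmb (0 : ℕ → M) 0 = 0 := by
  funext m
  by_cases h : m % 2 = 0 <;> simp [cmb, h]

lemma cmb_zero' [AddZeroClass M] : cmb (0 : ℕ → M) (0 : ℕ → M) = 0 := cmb_zero

lemma cmb_add₀ [AddZeroClass M] (a b : ℕ → M) :
    cmb (0 : ℕ → M) (a + b) = cmb 0 a + cmb 0 b := by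
  rw [← cmb_add, add_zero]

lemma cmb_add₀' [AddZeroClass M] (a b : ℕ → M) :
    cmb (a + b) (0 : ℕ → M) = cmb a 0 + cmb b 0 := by
  rw [← cmb_add, add_zero]

/-- split a sequence into even and odd parts, as an `AddEquiv`. -/
def splitAdd (M : Type*) [AddZeroClass M] : (ℕ → M) ≃+ (ℕ → M) × (ℕ → M) where
  toFun f := (fun n => f (2 * n), fun n => f (2 * n + 1))
  invFun uv := cmb uv.1 uv.2
  left_inv f := cmb_eq_self f
  right_inv := by
    rintro ⟨u, v⟩
    refine Prod.ext ?_ ?_ <;> funext n <;> simp [cmb_even, cmb_odd]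
  map_add' f g := rfl

end Aux

section PAux

variable (p : ℕ) [NeZero p]

lemma key_mod (a : ℕ) : ((p * (a % p) : ℕ) : ZMod (p ^ 2)) = ((p * a : ℕ) : ZMod (p ^ 2)) := by
  conv_rhs => rw [← Nat.mod_add_div a p]
  have h : p * (a % p + p * (a / p)) = p * (a % p) + p ^ 2 * (a / p) := by ring
  rw [h]
  push_cast
  rw [show ((p : ZMod (p ^ 2)) ^ 2 = ((p ^ 2 : ℕ) : ZMod (p ^ 2))) by push_cast; ring]
  rw [ZMod.natCast_self]
  ring

/-- the embedding `ZMod p → ZMod p²` given by multiplication by `p`. -/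
def mu : ZMod p →+ ZMod (p ^ 2) where
  toFun b := ((p * b.val : ℕ) : ZMod (p ^ 2))
  map_zero' := by simp
  map_add' x y := by
    show ((p * (x + y).val : ℕ) : ZMod (p ^ 2)) =
      ((p * x.val : ℕ) : ZMod (p ^ 2)) + ((p * y.val : ℕ) : ZMod (p ^ 2))
    rw [ZMod.val_add, key_mod, Nat.mul_add]
    push_cast
    ring

lemma mu_apply (b : ZMod p) : mu p b = ((p * b.val : ℕ) : ZMod (p ^ 2)) := rfl

lemma castHom_mu (b : ZMod p) :
    ZMod.castHom (dvd_pow_self p two_ne_zero) (ZMod p) (mu p b) = 0 := by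
  rw [mu_apply, map_natCast]
  simp [Nat.mul_mod_right, ZMod.natCast_self]

lemma mu_inj : Function.Injective (mu p) := by
  intro x y h
  have h0 : mu p (x - y) = 0 := by rw [map_sub, h, sub_self]
  rw [mu_apply, ZMod.natCast_eq_zero_iff, sq, mul_dvd_mul_iff_left (NeZero.ne p)] at h0
  have hv : (x - y).val = 0 := Nat.eq_zero_of_dvd_of_lt h0 (ZMod.val_lt _)
  have hxy : x - y = 0 := by rwa [ZMod.val_eq_zero] at hv
  exact sub_eq_zero.mp hxy

lemma self_cast_zmod [NeZero (p ^ 2)] (x : ZMod (p ^ 2)) :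
    ((x.val : ℕ) : ZMod (p ^ 2)) = x := by
  rw [ZMod.natCast_val, ZMod.cast_id]

/-- if the cast of `x : ZMod p²` to `ZMod p` is zero, then `p * x = 0`. -/
lemma pmul_eq_zero_of_cast_zero [NeZero (p ^ 2)] (x : ZMod (p ^ 2))
    (h : ZMod.castHom (dvd_pow_self p two_ne_zero) (ZMod p) x = 0) :
    (p : ZMod (p ^ 2)) * x = 0 := by
  have h' : p ∣ x.val := by
    rw [← self_cast_zmod p x, map_natCast, ZMod.natCast_eq_zero_iff] at h
    exact h
  calc (p : ZMod (p ^ 2)) * x = ((p * x.val : ℕ) : ZMod (p ^ 2)) := by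
        rw [Nat.cast_mul, self_cast_zmod]
    _ = 0 := by
        rw [ZMod.natCast_eq_zero_iff]
        obtain ⟨c, hc⟩ := h'
        exact ⟨c, by rw [hc]; ring⟩

/-- if cast of `x` to `ZMod p` is zero then `x` is in the range of `mu`. -/
lemma mem_range_mu [NeZero (p ^ 2)] (x : ZMod (p ^ 2))
    (h : ZMod.castHom (dvd_pow_self p two_ne_zero) (ZMod p) x = 0) :
    ∃ b : ZMod p, mu p b = x := by
  have h' : p ∣ x.val := by
    rw [← self_cast_zmod p x, map_natCast, ZMod.natCast_eq_zero_iff] at h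
    exact h
  refine ⟨((x.val / p : ℕ) : ZMod p), ?_⟩
  rw [mu_apply, ZMod.val_natCast, key_mod, Nat.mul_div_cancel' h', self_cast_zmod]

end PAux

/-- The direct extension theorem fails for infinite groups:
in `((ℕ → ZMod p) × (ℕ → ZMod (p ^ 2))) = (ℤ/pℤ)^ℕ × (ℤ/p²ℤ)^ℕ` there is an internal direct decomposition
`((ℕ → ZMod p) × (ℕ → ZMod (p ^ 2))) = H·K` and a subgroup `H₀` with `H₀ ≅ H ≅ (ℤ/pℤ)^ℕ` and
`((ℕ → ZMod p) × (ℕ → ZMod (p ^ 2)))/H₀ ≅ K ≅ ((ℕ → ZMod p) × (ℕ → ZMod (p ^ 2)))`, yet `H₀` is not a direct factor of `((ℕ → ZMod p) × (ℕ → ZMod (p ^ 2)))`. -/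
theorem direct_extension_fails_for_infinite_groups (p : ℕ) (hp : p.Prime) :
    ∃ (H K H₀ : AddSubgroup ((ℕ → ZMod p) × (ℕ → ZMod (p ^ 2)))),
      H ⊓ K = ⊥ ∧ H ⊔ K = ⊤ ∧
      Nonempty (H ≃+ (ℕ → ZMod p)) ∧
      Nonempty (H₀ ≃+ H) ∧
      Nonempty (K ≃+ ((ℕ → ZMod p) × (ℕ → ZMod (p ^ 2)))) ∧
      Nonempty ((((ℕ → ZMod p) × (ℕ → ZMod (p ^ 2))) ⧸ H₀) ≃+ K) ∧
      ¬ ∃ K₀ : AddSubgroup ((ℕ → ZMod p) × (ℕ → ZMod (p ^ 2))),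
          H₀ ⊔ K₀ = ⊤ ∧ H₀ ⊓ K₀ = ⊥ := by
  haveI : Fact p.Prime := ⟨hp⟩
  haveI : NeZero (p ^ 2) := ⟨pow_ne_zero 2 hp.ne_zero⟩
  -- the embedding whose range is H
  let ι : (ℕ → ZMod p) →+ ((ℕ → ZMod p) × (ℕ → ZMod (p ^ 2))) :=
  { toFun := fun a => (cmb 0 a, 0)
    map_zero' := by
      show (cmb (0 : ℕ → ZMod p) 0, (0 : ℕ → ZMod (p ^ 2))) = 0
      rw [cmb_zero]
      rfl
    map_add' := fun a b => by
      show (cmb 0 (a + b), (0 : ℕ → ZMod (p ^ 2))) = (cmb 0 a, 0) + (cmb 0 b, 0)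
      rw [Prod.mk_add_mk, cmb_add₀, add_zero] }
  -- the embedding whose range is K
  let κ : ((ℕ → ZMod p) × (ℕ → ZMod (p ^ 2))) →+ ((ℕ → ZMod p) × (ℕ → ZMod (p ^ 2))) :=
  { toFun := fun ag => (cmb ag.1 0, ag.2)
    map_zero' := by
      show (cmb (0 : ℕ → ZMod p) 0, (0 : ℕ → ZMod (p ^ 2))) = 0
      rw [cmb_zero]
      rfl
    map_add' := fun a b => by
      show (cmb (a.1 + b.1) 0, a.2 + b.2) = (cmb a.1 0, a.2) + (cmb b.1 0, b.2)
      rw [Prod.mk_add_mk, cmb_add₀'] }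
  -- the embedding whose range is H₀
  let θ : ((ℕ → ZMod p) × (ℕ → ZMod p)) →+ ((ℕ → ZMod p) × (ℕ → ZMod (p ^ 2))) :=
  { toFun := fun ab => (ab.1, cmb 0 (fun n => mu p (ab.2 n)))
    map_zero' := by
      show ((0 : ℕ → ZMod p), cmb 0 (fun n => mu p (0 : ZMod p))) = 0
      rw [show (fun _ : ℕ => mu p (0 : ZMod p)) = (0 : ℕ → ZMod (p ^ 2)) from funext fun _ => map_zero _, cmb_zero]
      rfl
    map_add' := fun a b => by
      show (a.1 + b.1, cmb 0 (fun n => mu p (a.2 n + b.2 n))) =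
        (a.1, cmb 0 (fun n => mu p (a.2 n))) + (b.1, cmb 0 (fun n => mu p (b.2 n)))
      rw [Prod.mk_add_mk]
      congr 1
      rw [show (fun n => mu p (a.2 n + b.2 n)) =
          (fun n => mu p (a.2 n)) + (fun n => mu p (b.2 n)) from
        funext fun n => by simp [Pi.add_apply, map_add], cmb_add₀] }
  -- the quotient map with kernel H₀
  let q : ((ℕ → ZMod p) × (ℕ → ZMod (p ^ 2))) →+ ((ℕ → ZMod (p ^ 2)) × (ℕ → ZMod p)) :=
  { toFun := fun fg => (fun n => fg.2 (2 * n),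
      fun n => ZMod.castHom (dvd_pow_self p two_ne_zero) (ZMod p) (fg.2 (2 * n + 1)))
    map_zero' := by
      show ((fun n => (0 : ℕ → ZMod (p ^ 2)) (2 * n), fun n =>
        ZMod.castHom (dvd_pow_self p two_ne_zero) (ZMod p) ((0 : ℕ → ZMod (p ^ 2)) (2 * n + 1))) :
          (ℕ → ZMod (p ^ 2)) × (ℕ → ZMod p)) = 0
      refine Prod.mk.injEq .. ▸ ⟨?_, ?_⟩ <;> funext n <;> simp
    map_add' := fun a b => by
      refine Prod.ext ?_ ?_ <;> funext n <;>
        simp [Prod.fst_add, Prod.snd_add, Pi.add_apply, map_add] }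
  have ιdef : ∀ a, ι a = (cmb 0 a, 0) := fun a => rfl
  have κdef : ∀ ag, κ ag = (cmb ag.1 0, ag.2) := fun ag => rfl
  have θdef : ∀ ab, θ ab = (ab.1, cmb 0 (fun n => mu p (ab.2 n))) := fun ab => rfl
  have qdef : ∀ fg : ((ℕ → ZMod p) × (ℕ → ZMod (p ^ 2))), q fg = (fun n => fg.2 (2 * n),
      fun n => ZMod.castHom (dvd_pow_self p two_ne_zero) (ZMod p) (fg.2 (2 * n + 1))) :=
    fun fg => rfl
  have hιinj : Function.Injective ι := by
    intro a b hab
    rw [ιdef, ιdef, Prod.mk.injEq] at hab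
    funext n
    have := congrFun hab.1 (2 * n + 1)
    rwa [cmb_odd, cmb_odd] at this
  have hκinj : Function.Injective κ := by
    intro a b hab
    rw [κdef, κdef, Prod.mk.injEq] at hab
    refine Prod.ext ?_ hab.2
    funext n
    have := congrFun hab.1 (2 * n)
    rwa [cmb_even, cmb_even] at this
  refine ⟨ι.range, κ.range, q.ker, ?_, ?_, ?_, ?_, ?_, ?_, ?_⟩
  · -- H ⊓ K = ⊥
    rw [eq_bot_iff]
    rintro ⟨f, g⟩ ⟨⟨a, ha⟩, ⟨bg, hb⟩⟩
    rw [ιdef, Prod.mk.injEq] at ha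
    rw [κdef, Prod.mk.injEq] at hb
    have h1 : f = cmb 0 a := ha.1.symm
    have h2 : f = cmb bg.1 0 := hb.1.symm
    have hf : f = 0 := by
      funext m
      rcases Nat.even_or_odd m with ⟨k, hk⟩ | ⟨k, hk⟩
      · subst hk; rw [show k + k = 2 * k by ring, h1, cmb_even]; rfl
      · subst hk; rw [h2, cmb_odd]; rfl
    have hg : g = 0 := ha.2.symm
    rw [AddSubgroup.mem_bot, Prod.mk.injEq]
    exact ⟨hf, hg⟩
  · -- H ⊔ K = ⊤
    rw [eq_top_iff]
    rintro ⟨f, g⟩ -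
    rw [AddSubgroup.mem_sup]
    refine ⟨(cmb 0 (fun n => f (2 * n + 1)), 0), ⟨fun n => f (2 * n + 1), rfl⟩,
      (cmb (fun n => f (2 * n)) 0, g), ⟨((fun n => f (2 * n)), g), rfl⟩, ?_⟩
    rw [Prod.mk_add_mk, Prod.mk.injEq]
    constructor
    · rw [← cmb_add]
      simpa using cmb_eq_self f
    · rw [zero_add]
  · -- H ≃+ (ℕ → ZMod p)
    exact ⟨(AddMonoidHom.ofInjective hιinj).symm⟩
  · -- H₀ ≃+ H
    have hθinj : Function.Injective θ := by
      intro a b hab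
      rw [θdef, θdef, Prod.mk.injEq] at hab
      have h2 : a.2 = b.2 := by
        funext n
        have := congrFun hab.2 (2 * n + 1)
        rw [cmb_odd, cmb_odd] at this
        exact mu_inj p this
      exact Prod.ext hab.1 h2
    have hrange : θ.range = q.ker := by
      ext fg
      obtain ⟨f, g⟩ := fg
      constructor
      · rintro ⟨⟨a, b⟩, hab⟩
        rw [θdef, Prod.mk.injEq] at hab
        rw [AddMonoidHom.mem_ker, qdef, Prod.mk.injEq]
        constructor
        · funext n
          rw [← hab.2]
          simp only [cmb_even]
          rfl
        · funext n
          rw [← hab.2]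
          simp only [cmb_odd]
          exact castHom_mu p (b n)
      · intro hker
        rw [AddMonoidHom.mem_ker, qdef, Prod.mk.injEq] at hker
        have he : ∀ n, g (2 * n) = 0 := fun n => congrFun hker.1 n
        have ho : ∀ n, ZMod.castHom (dvd_pow_self p two_ne_zero) (ZMod p) (g (2 * n + 1)) = 0 :=
          fun n => congrFun hker.2 n
        choose b hb using fun n => mem_range_mu p (g (2 * n + 1)) (ho n)
        refine ⟨(f, b), ?_⟩
        rw [θdef, Prod.mk.injEq]
        refine ⟨rfl, ?_⟩
        funext m
        rcases Nat.even_or_odd m with ⟨k, hk⟩ | ⟨k, hk⟩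
        · subst hk; rw [show k + k = 2 * k by ring, cmb_even, he k]; rfl
        · subst hk; rw [cmb_odd, hb k]
    exact ⟨(AddEquiv.addSubgroupCongr hrange).symm.trans
      ((AddMonoidHom.ofInjective hθinj).symm.trans
        (((splitAdd (ZMod p)).symm).trans (AddMonoidHom.ofInjective hιinj)))⟩
  · -- K ≃+ ((ℕ → ZMod p) × (ℕ → ZMod (p ^ 2)))
    exact ⟨(AddMonoidHom.ofInjective hκinj).symm⟩
  · -- ((ℕ → ZMod p) × (ℕ → ZMod (p ^ 2))) ⧸ H₀ ≃+ K
    have hqsurj : Function.Surjective q := by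
      rintro ⟨u, v⟩
      refine ⟨(0, cmb u (fun n => (((v n).val : ℕ) : ZMod (p ^ 2)))), ?_⟩
      rw [qdef, Prod.mk.injEq]
      constructor
      · funext n
        show cmb u (fun k => (((v k).val : ℕ) : ZMod (p ^ 2))) (2 * n) = u n
        rw [cmb_even]
      · funext n
        show ZMod.castHom (dvd_pow_self p two_ne_zero) (ZMod p)
          (cmb u (fun k => (((v k).val : ℕ) : ZMod (p ^ 2))) (2 * n + 1)) = v n
        rw [cmb_odd, map_natCast, ZMod.natCast_val, ZMod.cast_id]
    exact ⟨(QuotientAddGroup.quotientKerEquivOfSurjective q hqsurj).trans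
      (AddEquiv.prodComm.trans (AddMonoidHom.ofInjective hκinj))⟩
  · -- not a direct factor
    rintro ⟨K₀, hsup, hinf⟩
    set x : ((ℕ → ZMod p) × (ℕ → ZMod (p ^ 2))) := (0, fun m => if m = 1 then 1 else 0) with hx
    have hpx_ker : p • x ∈ q.ker := by
      rw [AddMonoidHom.mem_ker, qdef, Prod.mk.injEq]
      constructor
      · funext n
        simp only [hx, Prod.smul_snd, Pi.smul_apply]
        have h2n : (2 * n : ℕ) ≠ 1 := by omega
        simp [h2n]
      · funext n
        simp only [hx, Prod.smul_snd, Pi.smul_apply]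
        rcases Nat.eq_zero_or_pos n with hn | hn
        · subst hn
          simp [nsmul_eq_mul, mul_one, map_natCast, ZMod.natCast_self]
        · have h2n : (2 * n + 1 : ℕ) ≠ 1 := by omega
          simp [h2n, hn.ne']
    have hH0_smul : ∀ h ∈ q.ker, p • h = 0 := by
      rintro ⟨f, g⟩ hmem
      rw [AddMonoidHom.mem_ker, qdef, Prod.mk.injEq] at hmem
      have he : ∀ n, g (2 * n) = 0 := fun n => congrFun hmem.1 n
      have ho : ∀ n, ZMod.castHom (dvd_pow_self p two_ne_zero) (ZMod p) (g (2 * n + 1)) = 0 :=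
        fun n => congrFun hmem.2 n
      refine Prod.ext ?_ ?_
      · funext n
        simp only [Prod.smul_fst, Pi.smul_apply]
        rw [nsmul_eq_mul]
        simp [ZMod.natCast_self]
      · funext m
        simp only [Prod.smul_snd, Pi.smul_apply]
        rcases Nat.even_or_odd m with ⟨k, hk⟩ | ⟨k, hk⟩
        · rw [hk, show k + k = 2 * k by ring, he k, smul_zero]; rfl
        · rw [hk, nsmul_eq_mul]
          exact pmul_eq_zero_of_cast_zero p _ (ho k)
    have hxmem : x ∈ q.ker ⊔ K₀ := hsup ▸ AddSubgroup.mem_top x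
    rw [AddSubgroup.mem_sup] at hxmem
    obtain ⟨h, hh, k, hk, hhk⟩ := hxmem
    have hpk : p • x = p • k := by
      rw [← hhk, smul_add, hH0_smul h hh, zero_add]
    have hmem_inf : p • x ∈ q.ker ⊓ K₀ :=
      ⟨hpx_ker, hpk ▸ AddSubgroup.nsmul_mem K₀ hk p⟩
    rw [hinf, AddSubgroup.mem_bot] at hmem_inf
    have heval : (p • x).2 1 = (p : ZMod (p ^ 2)) := by
      simp [hx, nsmul_eq_mul]
    rw [hmem_inf] at heval
    simp only [Prod.snd_zero, Pi.zero_apply] at heval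
    have hpz : (p : ZMod (p ^ 2)) = 0 := heval.symm
    rw [ZMod.natCast_eq_zero_iff, sq] at hpz
    have hle := Nat.le_of_dvd (Nat.pos_of_ne_zero hp.ne_zero) hpz
    nlinarith [hp.two_le]
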